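/- Fix M ≥ 2, α > 0 and ε ∈ (0,1) with ε/2 − log ε > α log M − log 2 + 1. Let Δ_K be as above (scaled chi-square with 2K degrees of freedom) and P_K := M^{αK} · P(Δ_K ≤ ε). Then lim_{K→∞} P_K = 0. -/

import Mathlib

open MeasureTheory Filter

/-- Union bound for M-PSK LSE precoding (Appendix D): for `M ≥ 2`, `α > 0` and `ε ∈ (0,1)` with
`ε/2 - log ε > α log M - log 2 + 1`, the sequence
`P_K = M^(αK) · P(Δ_K ≤ ε)`, where `Δ_K` has density `K^K/(2^K Γ(K)) v^(K-1) e^(-Kv/2)` on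
`v > 0`, tends to `0` as `K → ∞`. -/
theorem mpsk_union_bound_vanishes (M : ℕ) (hM : 2 ≤ M) (α ε : ℝ) (hα : 0 < α)
    (hε0 : 0 < ε) (hε1 : ε < 1)
    (hcond : ε / 2 - Real.log ε > α * Real.log M - Real.log 2 + 1) :
    Tendsto (fun K : ℕ =>
        (M : ℝ) ^ (α * K) *
          ∫ v in Set.Ioc (0 : ℝ) ε,
            (K : ℝ) ^ K / (2 ^ K * Real.Gamma (K : ℝ)) * v ^ (K - 1) *
              Real.exp (-(K : ℝ) * v / 2))
      atTop (nhds 0) := by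
  have hM0 : (0:ℝ) < M := by positivity
  set s : ℝ := ε * Real.exp (-(ε/2)) with hs
  have hs0 : 0 < s := mul_pos hε0 (Real.exp_pos _)
  set r : ℝ := (M:ℝ)^α * Real.exp 1 * s / 2 with hr
  have hr0 : 0 < r := by positivity
  have hεs : ε = Real.exp (ε/2) * s := by
    rw [hs, ← mul_assoc, mul_comm (Real.exp (ε/2)) ε, mul_assoc, ← Real.exp_add]
    simp
  have hr1 : r < 1 := by
    have hlog : Real.log r = α * Real.log M + 1 + (Real.log ε - ε/2) - Real.log 2 := by
      rw [hr, hs, Real.log_div (by positivity) (by norm_num),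
        Real.log_mul (by positivity) (by positivity),
        Real.log_mul (by positivity) (Real.exp_pos 1).ne',
        Real.log_mul hε0.ne' (Real.exp_pos _).ne', Real.log_rpow hM0, Real.log_exp,
        Real.log_exp]
      ring
    have hneg : Real.log r < 0 := by rw [hlog]; linarith
    calc r = Real.exp (Real.log r) := (Real.exp_log hr0).symm
      _ < Real.exp 0 := Real.exp_lt_exp.mpr hneg
      _ = 1 := Real.exp_zero
  clear_value s r
  -- key pointwise bound
  have key : ∀ v ∈ Set.Ioc (0:ℝ) ε, v * Real.exp (-(v/2)) ≤ s := by
    intro v hv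
    obtain ⟨hv0, hvε⟩ := hv
    rw [hs]
    have h1 : (v-ε)/2 + 1 ≤ Real.exp ((v-ε)/2) := Real.add_one_le_exp _
    have h2 : Real.exp ((v-ε)/2) * Real.exp (-(v/2)) = Real.exp (-(ε/2)) := by
      rw [← Real.exp_add]; ring_nf
    have h3 : v ≤ ε * (1 + (v-ε)/2) := by nlinarith
    calc v * Real.exp (-(v/2)) ≤ (ε * (1 + (v-ε)/2)) * Real.exp (-(v/2)) :=
          mul_le_mul_of_nonneg_right h3 (Real.exp_pos _).le
      _ ≤ (ε * Real.exp ((v-ε)/2)) * Real.exp (-(v/2)) := by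
          have : 1 + (v-ε)/2 ≤ Real.exp ((v-ε)/2) := by linarith
          gcongr
      _ = ε * Real.exp (-(ε/2)) := by rw [mul_assoc, h2]
  -- eventual upper bound
  have hub : ∀ᶠ K : ℕ in atTop, (M : ℝ) ^ (α * K) *
      ∫ v in Set.Ioc (0 : ℝ) ε,
        (K : ℝ) ^ K / (2 ^ K * Real.Gamma (K : ℝ)) * v ^ (K - 1) *
          Real.exp (-(K : ℝ) * v / 2)
      ≤ Real.exp (ε/2) * ((K:ℝ) * r ^ K) := by
    filter_upwards [eventually_ge_atTop 1] with K hK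
    obtain ⟨n, rfl⟩ := Nat.exists_eq_add_of_le hK
    set K := 1 + n with hKdef
    have hKn : K - 1 = n := by omega
    have hK0 : (0:ℝ) < K := by positivity
    set c : ℝ := (K : ℝ) ^ K / (2 ^ K * Real.Gamma (K : ℝ)) with hc
    have hΓ : Real.Gamma (K : ℝ) = (Nat.factorial n : ℝ) := by
      have h : ((K:ℕ) : ℝ) = (n:ℝ) + 1 := by push_cast [hKdef]; ring
      rw [h, Real.Gamma_nat_eq_factorial]
    have hc0 : 0 ≤ c := by
      rw [hc, hΓ]; positivity
    -- pointwise bound on integrand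
    have hpt : ∀ v ∈ Set.Ioc (0:ℝ) ε,
        c * v ^ (K - 1) * Real.exp (-(K : ℝ) * v / 2) ≤ c * s ^ (K-1) := by
      intro v hv
      have hv0 : 0 < v := hv.1
      have hexp : Real.exp (-(K : ℝ) * v / 2) = (Real.exp (-(v/2)))^K := by
        rw [← Real.exp_nat_mul]; ring_nf
      have he1 : Real.exp (-(v/2)) ≤ 1 :=
        Real.exp_le_one_iff.mpr (by linarith)
      have he0 : 0 ≤ Real.exp (-(v/2)) := (Real.exp_pos _).le
      have hpow : (Real.exp (-(v/2)))^K ≤ (Real.exp (-(v/2)))^(K-1) := by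
        have h5 : (Real.exp (-(v/2)))^K = (Real.exp (-(v/2)))^(K-1) * Real.exp (-(v/2)) := by
          rw [← pow_succ, Nat.sub_add_cancel hK]
        rw [h5]
        nlinarith [pow_nonneg he0 (K-1)]
      calc c * v ^ (K - 1) * Real.exp (-(K : ℝ) * v / 2)
          = c * (v ^ (K-1) * (Real.exp (-(v/2)))^K) := by rw [hexp]; ring
        _ ≤ c * (v ^ (K-1) * (Real.exp (-(v/2)))^(K-1)) := by
            have := pow_nonneg hv0.le (K-1)
            gcongr
        _ = c * ((v * Real.exp (-(v/2)))^(K-1)) := by rw [mul_pow]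
        _ ≤ c * s ^ (K-1) :=
            mul_le_mul_of_nonneg_left
              (pow_le_pow_left₀ (mul_nonneg hv0.le he0) (key v hv) _) hc0
    -- integral bound
    have hint : IntegrableOn (fun v : ℝ =>
        c * v ^ (K - 1) * Real.exp (-(K : ℝ) * v / 2)) (Set.Ioc 0 ε) := by
      apply Continuous.integrableOn_Ioc
      exact (continuous_const.mul (continuous_pow _)).mul
        (Real.continuous_exp.comp ((continuous_const.mul continuous_id).div_const 2))
    have hmono : (∫ v in Set.Ioc (0:ℝ) ε,
        c * v ^ (K - 1) * Real.exp (-(K : ℝ) * v / 2))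
        ≤ ∫ _ in Set.Ioc (0:ℝ) ε, c * s ^ (K-1) := by
      apply setIntegral_mono_on hint _ measurableSet_Ioc hpt
      exact integrableOn_const (by rw [Real.volume_Ioc]; exact ENNReal.ofReal_ne_top)
    have hconst : (∫ _ in Set.Ioc (0:ℝ) ε, c * s ^ (K-1)) = ε * (c * s ^ (K-1)) := by
      rw [setIntegral_const, Real.volume_real_Ioc_of_le (by linarith), smul_eq_mul]
      ring
    -- coefficient bound
    have hcle : c ≤ (K:ℝ) * Real.exp 1 ^ K / 2^K := by
      rw [hc, hΓ, Real.exp_one_pow, div_le_div_iff₀ (by positivity) (by positivity)]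
      have h1 : (K:ℝ)^K / (Nat.factorial K : ℝ) ≤ Real.exp K :=
        Real.pow_div_factorial_le_exp _ hK0.le K
      have h3 : (K:ℝ)^K ≤ Real.exp K * (Nat.factorial K : ℝ) :=
        (div_le_iff₀ (by positivity)).mp h1
      have h2 : (Nat.factorial K : ℝ) = (K:ℝ) * (Nat.factorial n : ℝ) := by
        have h : K = n + 1 := by omega
        rw [h]; push_cast [Nat.factorial_succ]; ring
      calc (K:ℝ)^K * 2^K ≤ (Real.exp K * (Nat.factorial K : ℝ)) * 2^K := by
            have h4 : (0:ℝ) ≤ 2^K := by positivity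
            gcongr
        _ = (K:ℝ) * Real.exp (K:ℝ) * (2^K * (Nat.factorial n : ℝ)) := by rw [h2]; ring
    -- assemble
    have hrpow : (M : ℝ) ^ (α * (K:ℕ)) = ((M:ℝ)^α)^K := by
      rw [Real.rpow_mul hM0.le, Real.rpow_natCast]
    have hMα0 : (0:ℝ) ≤ ((M:ℝ)^α)^K := by positivity
    calc (M : ℝ) ^ (α * (K:ℕ)) *
        ∫ v in Set.Ioc (0 : ℝ) ε,
          (K : ℝ) ^ K / (2 ^ K * Real.Gamma (K : ℝ)) * v ^ (K - 1) *
            Real.exp (-(K : ℝ) * v / 2)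
        ≤ ((M:ℝ)^α)^K * (ε * (c * s ^ (K-1))) := by
          rw [hrpow]
          gcongr
          exact hmono.trans_eq hconst
      _ ≤ ((M:ℝ)^α)^K * (ε * (((K:ℝ) * Real.exp 1 ^ K / 2^K) * s ^ (K-1))) := by
          have hsn : (0:ℝ) ≤ s ^ (K-1) := by positivity
          gcongr
      _ = Real.exp (ε/2) * ((K:ℝ) * r ^ K) := by
          have hsK : s ^ K = s * s ^ n := by
            rw [hKdef, pow_add, pow_one]
          rw [hr, div_pow, mul_pow, mul_pow, hKn, hsK]
          conv_lhs => rw [hεs]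
          ring
  -- squeeze
  have hlb : ∀ᶠ K : ℕ in atTop, 0 ≤ (M : ℝ) ^ (α * K) *
      ∫ v in Set.Ioc (0 : ℝ) ε,
        (K : ℝ) ^ K / (2 ^ K * Real.Gamma (K : ℝ)) * v ^ (K - 1) *
          Real.exp (-(K : ℝ) * v / 2) := by
    filter_upwards [eventually_ge_atTop 1] with K hK
    have hΓpos : 0 < Real.Gamma (K : ℝ) :=
      Real.Gamma_pos_of_pos (by exact_mod_cast Nat.lt_of_lt_of_le Nat.zero_lt_one hK)
    apply mul_nonneg (by positivity)
    apply setIntegral_nonneg measurableSet_Ioc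
    intro v hv
    have hv0 : 0 < v := hv.1
    positivity
  have htend : Tendsto (fun K : ℕ => Real.exp (ε/2) * ((K:ℝ) * r ^ K)) atTop (nhds 0) := by
    have h := tendsto_pow_const_mul_const_pow_of_lt_one 1 hr0.le hr1
    simp only [pow_one] at h
    simpa using h.const_mul (Real.exp (ε/2))
  exact squeeze_zero' hlb hub htend
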